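/- For distinct positive integers a, b with a > b, the product a·b·(a² - b²) is never a perfect square. -/

import Mathlib

lemma pos_sq_of_coprime {x y c : ℤ} (h : IsCoprime x y) (heq : x * y = c ^ 2)
    (hx : 0 < x) : ∃ p : ℤ, 0 < p ∧ x = p ^ 2 := by
  obtain ⟨p, hp | hp⟩ := Int.sq_of_isCoprime h heq
  · rcases eq_or_ne p 0 with rfl | hp0
    · simp [hp] at hx
    · exact ⟨|p|, abs_pos.mpr hp0, by rw [hp, sq_abs]⟩
  · nlinarith [sq_nonneg p]

lemma coprime_two_of_odd {n : ℤ} (h : n % 2 = 1) : IsCoprime n 2 :=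
  ⟨1, -(n / 2), by omega⟩

lemma isCoprime_of_add_sub {u v : ℤ} (h : IsCoprime (u + v) (u - v)) : IsCoprime u v := by
  obtain ⟨α, β, hab⟩ := h
  exact ⟨α + β, α - β, by linarith [hab]⟩

lemma descent_core {u v p w : ℤ} (hu : 0 < u) (hv : 0 < v) (hp : 0 < p)
    (hcop : IsCoprime u v) (huv : u * v = 2 * w ^ 2) (hpyth : u ^ 2 + v ^ 2 = p ^ 2)
    (hueven : u % 2 = 0) (hvodd : v % 2 = 1) :
    ∃ a₁ b₁ c₁ : ℤ, 0 < a₁ ∧ 0 < b₁ ∧ a₁ ≠ b₁ ∧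
      a₁ * b₁ * (a₁ ^ 2 - b₁ ^ 2) = c₁ ^ 2 ∧ c₁ ^ 2 = w ^ 2 := by
  -- u = 2m
  obtain ⟨m, rfl⟩ : ∃ m, u = 2 * m := ⟨u / 2, by omega⟩
  have hm : 0 < m := by omega
  have hmv : m * v = w ^ 2 := by linarith
  have hcmv : IsCoprime m v := IsCoprime.of_mul_left_right hcop
  obtain ⟨g, hg, hgm⟩ := pos_sq_of_coprime hcmv hmv hm
  obtain ⟨h, hh, hhv⟩ := pos_sq_of_coprime (hcmv.symm) (by rw [mul_comm]; exact hmv) hv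
  -- p^2 = (2 g^2)^2 + (h^2)^2, primitive with h^2 odd
  have hpyth2 : PythagoreanTriple (h ^ 2) (2 * g ^ 2) p := by
    unfold PythagoreanTriple; nlinarith [hpyth, hgm, hhv]
  have hgcd : Int.gcd (h ^ 2) (2 * g ^ 2) = 1 := by
    rw [← Int.isCoprime_iff_gcd_eq_one]
    have hcv2m : IsCoprime v (2 * m) := (coprime_two_of_odd hvodd).mul_right hcmv.symm
    rw [← hhv, ← hgm]; exact hcv2m
  have hhodd : h ^ 2 % 2 = 1 := by rw [← hhv]; exact hvodd
  obtain ⟨m', n', hx', hy', hz', hcop', hpar', hm'0⟩ :=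
    hpyth2.coprime_classification' hgcd hhodd hp
  have hg2 : m' * n' = g ^ 2 := by
    have h2' : 2 * (m' * n') = 2 * g ^ 2 := by linear_combination -hy'
    exact mul_left_cancel₀ two_ne_zero h2'
  have hm'pos : 0 < m' := by
    rcases hm'0.lt_or_eq with h1 | h1
    · exact h1
    · exfalso; nlinarith
  have hn'pos : 0 < n' := by nlinarith
  have hcop'' : IsCoprime m' n' := Int.isCoprime_iff_gcd_eq_one.mpr hcop'
  obtain ⟨e, he0, he⟩ := pos_sq_of_coprime hcop'' hg2 hm'pos
  obtain ⟨f, hf0, hf⟩ := pos_sq_of_coprime hcop''.symm (by rw [mul_comm]; exact hg2) hn'pos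
  have heqn : h ^ 2 = e ^ 4 - f ^ 4 := by rw [hx', he, hf]; ring
  refine ⟨e ^ 2, f ^ 2, e * f * h, by positivity, by positivity, ?_, ?_, ?_⟩
  · intro hcontra
    have h0 : h ^ 2 = 0 := by
      rw [heqn]; linear_combination (e ^ 2 + f ^ 2) * hcontra
    linarith [pow_pos hh 2]
  · linear_combination (-(e ^ 2 * f ^ 2)) * heqn
  · calc (e * f * h) ^ 2 = m' * n' * h ^ 2 := by rw [he, hf]; ring
      _ = g ^ 2 * h ^ 2 := by rw [hg2]
      _ = m * v := by rw [hgm, hhv]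
      _ = w ^ 2 := hmv


lemma stepC {a b c : ℤ}
    (ih : ∀ m, m < c.natAbs → ∀ a b c : ℤ, c.natAbs = m → 0 < a → 0 < b → a ≠ b →
      a * b * (a ^ 2 - b ^ 2) ≠ c ^ 2)
    (ha : 0 < a) (hb : 0 < b) (hba : b < a) (hco : IsCoprime a b)
    (heq : a * b * (a ^ 2 - b ^ 2) = c ^ 2) (hc0 : c ≠ 0)
    (hodd : (a + b) % 2 = 1) : False := by
  -- coprimality of the four factors
  have h1 : IsCoprime a (a + b) := by
    have h := hco.add_mul_left_right 1
    rw [mul_one] at h; rwa [add_comm]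
  have h2 : IsCoprime a (a - b) := by
    have h := hco.neg_right.add_mul_left_right 1
    have e : -b + a * 1 = a - b := by ring
    rwa [e] at h
  have h3 : IsCoprime b (a + b) := by
    have h := hco.symm.add_mul_left_right 1
    rwa [mul_one] at h
  have h4 : IsCoprime b (a - b) := by
    have h := hco.symm.add_mul_left_right (-1)
    have e : a + b * (-1) = a - b := by ring
    rwa [e] at h
  have h5 : IsCoprime (a + b) (a - b) := by
    have h := ((coprime_two_of_odd hodd).mul_right h3.symm).neg_right.add_mul_left_right 1
    have e : -(2 * b) + (a + b) * 1 = a - b := by ring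
    rwa [e] at h
  have hab2 : 0 < a ^ 2 - b ^ 2 := by nlinarith
  -- extract the four squares
  obtain ⟨p, hp0, hp⟩ := pos_sq_of_coprime (hco.mul_right (h1.mul_right h2))
    (c := c) (by linear_combination heq) ha
  obtain ⟨q, hq0, hq⟩ := pos_sq_of_coprime (hco.symm.mul_right (h3.mul_right h4))
    (c := c) (by linear_combination heq) hb
  obtain ⟨r, hr0, hr⟩ := pos_sq_of_coprime (h1.symm.mul_right (h3.symm.mul_right h5))
    (c := c) (by linear_combination heq) (by linarith)
  obtain ⟨s, hs0, hs⟩ := pos_sq_of_coprime (h2.symm.mul_right (h4.symm.mul_right h5.symm))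
    (c := c) (by linear_combination heq) (by linarith)
  -- r and s are odd
  have hrodd : r % 2 = 1 := by
    rw [← Int.odd_iff]
    have hro : Odd (r ^ 2) := by rw [← hr, Int.odd_iff]; omega
    rcases Int.odd_pow.mp hro with h | h
    · exact h
    · omega
  have hsodd : s % 2 = 1 := by
    rw [← Int.odd_iff]
    have hso : Odd (s ^ 2) := by rw [← hs, Int.odd_iff]; omega
    rcases Int.odd_pow.mp hso with h | h
    · exact h
    · omega
  have hrs : s < r := by nlinarith
  -- split r, s into u, v
  obtain ⟨u, hu⟩ : ∃ u, r + s = 2 * u := ⟨(r + s) / 2, by omega⟩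
  obtain ⟨v, hv⟩ : ∃ v, r - s = 2 * v := ⟨(r - s) / 2, by omega⟩
  have hruv : r = u + v := by omega
  have hsuv : s = u - v := by omega
  have hvu : 0 < v := by omega
  have huu : 0 < u := by omega
  have hpyth : u ^ 2 + v ^ 2 = p ^ 2 := by
    have h2a : 2 * (u ^ 2 + v ^ 2) = 2 * p ^ 2 := by
      rw [hruv] at hr; rw [hsuv] at hs
      linear_combination -hr - hs + 2 * hp
    exact mul_left_cancel₀ two_ne_zero h2a
  have hbq : b = 2 * (u * v) := by
    have h2b : 2 * b = 2 * (2 * (u * v)) := by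
      rw [hruv] at hr; rw [hsuv] at hs
      linear_combination hr - hs
    exact mul_left_cancel₀ two_ne_zero h2b
  -- q is even, q = 2w
  have hqeven : Even q := by
    have : Even (q ^ 2) := ⟨u * v, by rw [← hq]; linarith⟩
    exact (Int.even_pow.mp this).1
  obtain ⟨w, hw⟩ := hqeven
  have huv : u * v = 2 * w ^ 2 := by
    have h2 : 2 * (u * v) = 2 * (2 * w ^ 2) := by
      rw [← hbq, hq, hw]; ring
    exact mul_left_cancel₀ two_ne_zero h2
  -- u, v coprime, opposite parity
  have hcoprs : IsCoprime r s := by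
    rw [hr, hs, pow_two, pow_two] at h5
    exact (h5.of_mul_left_left).of_mul_right_left
  have hcopuv : IsCoprime u v := by
    apply isCoprime_of_add_sub
    rwa [← hruv, ← hsuv]
  have hw0 : w ≠ 0 := by
    rintro rfl
    omega
  -- apply the core descent
  have hpar : (u % 2 = 0 ∧ v % 2 = 1) ∨ (u % 2 = 1 ∧ v % 2 = 0) := by omega
  have hdesc : ∃ a₁ b₁ c₁ : ℤ, 0 < a₁ ∧ 0 < b₁ ∧ a₁ ≠ b₁ ∧
      a₁ * b₁ * (a₁ ^ 2 - b₁ ^ 2) = c₁ ^ 2 ∧ c₁ ^ 2 = w ^ 2 := by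
    rcases hpar with ⟨hue, hvo⟩ | ⟨huo, hve⟩
    · exact descent_core huu hvu hp0 hcopuv huv hpyth hue hvo
    · exact descent_core hvu huu hp0 hcopuv.symm (by linarith [huv, mul_comm u v])
        (by linarith) hve huo
  obtain ⟨a₁, b₁, c₁, ha₁, hb₁, hne₁, heq₁, hcw⟩ := hdesc
  -- the new solution is smaller
  have hc₁c : c₁ ^ 2 < c ^ 2 := by
    have hb4 : b = 4 * w ^ 2 := by rw [hbq, huv]; ring
    have h1a : (1 : ℤ) ≤ a := ha
    have h1d : (1 : ℤ) ≤ a ^ 2 - b ^ 2 := hab2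
    have hble : b ≤ c ^ 2 := by
      nlinarith [mul_nonneg (sub_nonneg.mpr h1a) hb.le,
        mul_nonneg (mul_pos ha hb).le (sub_nonneg.mpr h1d)]
    have hwpos : 0 < w ^ 2 := by positivity
    linarith [hcw, hb4, hble]
  have hlt : c₁.natAbs < c.natAbs := by
    have h1 : (c₁ ^ 2).natAbs < (c ^ 2).natAbs :=
      Int.natAbs_lt_natAbs_of_nonneg_of_lt (sq_nonneg c₁) hc₁c
    rw [Int.natAbs_pow, Int.natAbs_pow] at h1
    exact lt_of_pow_lt_pow_left₀ 2 (Nat.zero_le _) h1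
  exact ih c₁.natAbs hlt a₁ b₁ c₁ rfl ha₁ hb₁ hne₁ heq₁

lemma no_sol : ∀ n : ℕ, ∀ a b c : ℤ, c.natAbs = n → 0 < a → 0 < b → a ≠ b →
    a * b * (a ^ 2 - b ^ 2) ≠ c ^ 2 := by
  intro n
  induction n using Nat.strong_induction_on with
  | _ n ih =>
  rintro a b c rfl ha hb hne heq
  have hba : b < a := by
    rcases lt_trichotomy a b with h | h | h
    · have h1 : a ^ 2 - b ^ 2 < 0 := by nlinarith
      nlinarith [sq_nonneg c, mul_pos ha hb]
    · exact absurd h hne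
    · exact h
  have hc0 : c ≠ 0 := by
    rintro rfl
    have h1 : 0 < a ^ 2 - b ^ 2 := by nlinarith
    have h2 : 0 < a * b * (a ^ 2 - b ^ 2) := by positivity
    rw [heq] at h2; simp at h2
  by_cases hg1 : Int.gcd a b = 1
  · -- coprime case
    have hco : IsCoprime a b := Int.isCoprime_iff_gcd_eq_one.mpr hg1
    rcases Int.emod_two_eq a with hpa | hpa <;> rcases Int.emod_two_eq b with hpb | hpb
    · -- both even: contradicts coprimality
      have h2a : (2 : ℤ) ∣ a := by omega
      have h2b : (2 : ℤ) ∣ b := by omega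
      have := hco.isUnit_of_dvd' h2a h2b
      rw [Int.isUnit_iff] at this
      omega
    · -- a even, b odd : step C
      exact stepC ih ha hb hba hco heq hc0 (by omega)
    · -- a odd, b even : step C
      exact stepC ih ha hb hba hco heq hc0 (by omega)
    · -- both odd : step B
      obtain ⟨u, hu⟩ : ∃ u, a + b = 2 * u := ⟨(a + b) / 2, by omega⟩
      obtain ⟨v, hv⟩ : ∃ v, a - b = 2 * v := ⟨(a - b) / 2, by omega⟩
      have hau : a = u + v := by omega
      have hbu : b = u - v := by omega
      have hc2 : c ^ 2 = 4 * (u * v * (u ^ 2 - v ^ 2)) := by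
        rw [hau, hbu] at heq; linear_combination -heq
      have h4c : (2 : ℤ) ^ 2 ∣ c ^ 2 := ⟨u * v * (u ^ 2 - v ^ 2), by linarith⟩
      have h2c : (2 : ℤ) ∣ c := (Int.pow_dvd_pow_iff two_ne_zero).mp h4c
      obtain ⟨c₀, rfl⟩ := h2c
      have heq₀ : u * v * (u ^ 2 - v ^ 2) = c₀ ^ 2 := by
        have h4 : (4 : ℤ) * (u * v * (u ^ 2 - v ^ 2)) = 4 * c₀ ^ 2 := by
          rw [← hc2]; ring
        linarith
      have hvpos : 0 < v := by omega
      have hupos : 0 < u := by omega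
      have hune : u ≠ v := by omega
      have hlt : c₀.natAbs < (2 * c₀).natAbs := by
        have hc₀0 : c₀ ≠ 0 := by rintro rfl; exact hc0 (mul_zero 2)
        rw [Int.natAbs_mul]
        have h0 : 0 < c₀.natAbs := Int.natAbs_pos.mpr hc₀0
        have h2 : (2 : ℤ).natAbs = 2 := rfl
        rw [h2]
        omega
      exact ih c₀.natAbs hlt u v c₀ rfl hupos hvpos hune heq₀
  · -- gcd > 1 : divide out
    have hgne : Int.gcd a b ≠ 0 := by
      intro h
      rw [Int.gcd_eq_zero_iff] at h
      omega
    set g : ℤ := (Int.gcd a b : ℤ) with hgdef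
    have hgpos : 0 < g := by rw [hgdef]; omega
    obtain ⟨a₀, ha₀⟩ : g ∣ a := Int.gcd_dvd_left a b
    obtain ⟨b₀, hb₀⟩ : g ∣ b := Int.gcd_dvd_right a b
    have hc4 : c ^ 2 = g ^ 4 * (a₀ * b₀ * (a₀ ^ 2 - b₀ ^ 2)) := by
      rw [ha₀, hb₀] at heq; linear_combination -heq
    have hdvd : (g ^ 2) ^ 2 ∣ c ^ 2 := ⟨a₀ * b₀ * (a₀ ^ 2 - b₀ ^ 2), by rw [hc4]; ring⟩
    have h2c : g ^ 2 ∣ c := (Int.pow_dvd_pow_iff two_ne_zero).mp hdvd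
    obtain ⟨c₀, hc₀⟩ := h2c
    have heq₀ : a₀ * b₀ * (a₀ ^ 2 - b₀ ^ 2) = c₀ ^ 2 := by
      have hg4 : (g ^ 4 : ℤ) ≠ 0 := by positivity
      have h := hc4
      rw [hc₀] at h
      have h2 : g ^ 4 * (a₀ * b₀ * (a₀ ^ 2 - b₀ ^ 2)) = g ^ 4 * c₀ ^ 2 := by
        linear_combination -h
      exact mul_left_cancel₀ hg4 h2
    have ha₀pos : 0 < a₀ := by nlinarith
    have hb₀pos : 0 < b₀ := by nlinarith
    have hne₀ : a₀ ≠ b₀ := by rintro rfl; exact hne (by rw [ha₀, hb₀])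
    have hlt : c₀.natAbs < c.natAbs := by
      have hc₀0 : c₀ ≠ 0 := by rintro rfl; rw [mul_zero] at hc₀; exact hc0 hc₀
      have h1 : c.natAbs = (g ^ 2).natAbs * c₀.natAbs := by rw [hc₀, Int.natAbs_mul]
      have h2 : (g ^ 2).natAbs = Int.gcd a b ^ 2 := by
        rw [Int.natAbs_pow, hgdef, Int.natAbs_natCast]
      have h3 : 4 ≤ Int.gcd a b ^ 2 := by
        have : 2 ≤ Int.gcd a b := by omega
        nlinarith
      have h4 : 0 < c₀.natAbs := Int.natAbs_pos.mpr hc₀0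
      rw [h2] at h1
      nlinarith
    exact ih c₀.natAbs hlt a₀ b₀ c₀ rfl ha₀pos hb₀pos hne₀ heq₀

theorem stmt_11 (a b : ℤ) (hb : 0 < b) (hab : b < a) :
    ¬ IsSquare (a * b * (a ^ 2 - b ^ 2)) := by
  rintro ⟨r, hr⟩
  exact no_sol r.natAbs a b r rfl (by linarith) hb (by omega) (by rw [hr]; ring)
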